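/- Let (Ω,𝓕,P) be a probability space carrying a random vector X : Ω → ℝ^d, random variables U : Ω → [0,1], V : Ω → [0,1], and ε : Ω → ℝ, and let β₀ : [0,1] → ℝ^d be Borel measurable. Define Y = ⟨X, β₀(U)⟩ + ε. Assume (i) ε is independent of the triple (X, V, U), and (ii) X and U are conditionally independent given the σ-algebra generated by V. Let F_ε(t) = P(ε ≤ t) and let κ denote a regular conditional distribution of U given V. Then for (P ∘ (X,V)⁻¹)-almost every (x,v), the regular conditional distribution of Y given (X,V) = (x,v) satisfies, for every y ∈ ℝ, P(Y ≤ y | X = x, V = v) = ∫_{[0,1]} F_ε(y − ⟨x, β₀(u)⟩) dκ_v(u). -/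

import Mathlib

open MeasureTheory ProbabilityTheory
open scoped RealInnerProductSpace ENNReal

set_option linter.unusedSectionVars false

section AuxCondDistribCDF

variable {Ω : Type*} [MeasurableSpace Ω] [StandardBorelSpace Ω] [Nonempty Ω]
  {β : Type*} [MeasurableSpace β]

lemma rect_core (P : Measure Ω) [IsProbabilityMeasure P]
    (X : Ω → β) (U V : Ω → ℝ)
    (hX : Measurable X) (hU : Measurable U) (hV : Measurable V)
    (hcondindep : CondIndepFun (MeasurableSpace.comap V inferInstance)
      (Measurable.comap_le hV) X U P)
    {A : Set β} {B C : Set ℝ} (hA : MeasurableSet A) (hB : MeasurableSet B)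
    (hC : MeasurableSet C) :
    (P (X ⁻¹' A ∩ V ⁻¹' C ∩ U ⁻¹' B)).toReal
      = ∫ ω in X ⁻¹' A ∩ V ⁻¹' C, (condDistrib U V P (V ω) B).toReal ∂P := by
  have hm : MeasurableSpace.comap V inferInstance ≤ ‹MeasurableSpace Ω› :=
    Measurable.comap_le hV
  have hCm : MeasurableSet[MeasurableSpace.comap V inferInstance] (V ⁻¹' C) := ⟨C, hC, rfl⟩
  have hci := (condIndepFun_iff_condExp_inter_preimage_eq_mul hX hU).mp hcondindep A B hA hB
  have hcd := condDistrib_ae_eq_condExp (μ := P) hV hU hB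
  simp only [measureReal_def] at hcd
  set f : Ω → ℝ := fun ω => (condDistrib U V P (V ω) B).toReal with hf_def
  have hf_meas : StronglyMeasurable[MeasurableSpace.comap V inferInstance] f :=
    ((measurable_condDistrib (μ := P) hB).ennreal_toReal).stronglyMeasurable
  have hf_bdd : ∀ ω, ‖f ω‖ ≤ 1 := by
    intro ω
    rw [Real.norm_eq_abs, abs_of_nonneg ENNReal.toReal_nonneg]
    exact ENNReal.toReal_le_of_le_ofReal zero_le_one (by simpa using prob_le_one)
  set g : Ω → ℝ := (X ⁻¹' A).indicator (fun _ => (1:ℝ)) with hg_def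
  have hg_int : Integrable g P := (integrable_const (1:ℝ)).indicator (hX hA)
  have hfg_int : Integrable (f * g) P :=
    Integrable.bdd_mul hg_int ((hf_meas.mono hm).aestronglyMeasurable (μ := P)) (ae_of_all _ hf_bdd)
  have hind_int : Integrable ((X ⁻¹' A ∩ U ⁻¹' B).indicator (fun _ => (1:ℝ))) P :=
    (integrable_const (1:ℝ)).indicator ((hX hA).inter (hU hB))
  have hpull := condExp_mul_of_stronglyMeasurable_left (μ := P) hf_meas hfg_int hg_int
  calc (P (X ⁻¹' A ∩ V ⁻¹' C ∩ U ⁻¹' B)).toReal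
      = ∫ ω in V ⁻¹' C, (X ⁻¹' A ∩ U ⁻¹' B).indicator (fun _ => (1:ℝ)) ω ∂P := by
        rw [integral_indicator_const (1:ℝ) ((hX hA).inter (hU hB)), measureReal_def,
          Measure.restrict_apply ((hX hA).inter (hU hB)), smul_eq_mul, mul_one,
          Set.inter_right_comm]
    _ = ∫ ω in V ⁻¹' C, (P⟦X ⁻¹' A ∩ U ⁻¹' B | MeasurableSpace.comap V inferInstance⟧) ω ∂P :=
        (setIntegral_condExp hm hind_int hCm).symm
    _ = ∫ ω in V ⁻¹' C, (f * P[g | MeasurableSpace.comap V inferInstance]) ω ∂P := by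
        refine setIntegral_congr_ae (hm _ hCm) ?_
        filter_upwards [hci, hcd] with ω h1 h2 _
        have : g = (X ⁻¹' A).indicator (fun _ => (1:ℝ)) := rfl
        rw [h1]
        simp only [Pi.mul_apply]
        rw [← h2]
        ring_nf
    _ = ∫ ω in V ⁻¹' C, (P[f * g | MeasurableSpace.comap V inferInstance]) ω ∂P := by
        refine setIntegral_congr_ae (hm _ hCm) ?_
        filter_upwards [hpull] with ω h _
        exact h.symm
    _ = ∫ ω in V ⁻¹' C, (f * g) ω ∂P := setIntegral_condExp hm hfg_int hCm
    _ = ∫ ω in V ⁻¹' C, (X ⁻¹' A).indicator f ω ∂P := by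
        refine setIntegral_congr_ae (hm _ hCm) (ae_of_all _ fun ω _ => ?_)
        by_cases hω : ω ∈ X ⁻¹' A
        · simp [hg_def, Set.indicator_of_mem hω]
        · simp [hg_def, Set.indicator_of_notMem hω]
    _ = ∫ ω in V ⁻¹' C ∩ X ⁻¹' A, f ω ∂P := setIntegral_indicator (hX hA)
    _ = ∫ ω in X ⁻¹' A ∩ V ⁻¹' C, f ω ∂P := by rw [Set.inter_comm]

lemma stepA (P : Measure Ω) [IsProbabilityMeasure P]
    (X : Ω → β) (U V : Ω → ℝ)
    (hX : Measurable X) (hU : Measurable U) (hV : Measurable V)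
    (hcondindep : CondIndepFun (MeasurableSpace.comap V inferInstance)
      (Measurable.comap_le hV) X U P) :
    P.map (fun ω => ((X ω, V ω), U ω))
      = (P.map (fun ω => (X ω, V ω))) ⊗ₘ
        ((condDistrib U V P).comap (Prod.snd : β × ℝ → ℝ) measurable_snd) := by
  have hXV : Measurable fun ω => (X ω, V ω) := hX.prodMk hV
  haveI : IsProbabilityMeasure (P.map fun ω => (X ω, V ω)) :=
    Measure.isProbabilityMeasure_map hXV.aemeasurable
  set μ := P.map (fun ω => (X ω, V ω)) with hμ_def
  set κ := condDistrib U V P with hκ_def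
  set η := κ.comap (Prod.snd : β × ℝ → ℝ) measurable_snd with hη_def
  haveI : IsMarkovKernel η := by rw [hη_def]; infer_instance
  -- rectangle identity
  have key : ∀ B : Set ℝ, MeasurableSet B → ∀ A : Set β, MeasurableSet A →
      ∀ C : Set ℝ, MeasurableSet C →
      P ((fun ω => (X ω, V ω)) ⁻¹' (A ×ˢ C) ∩ U ⁻¹' B)
        = ∫⁻ p in A ×ˢ C, κ p.2 B ∂μ := by
    intro B hB A hA C hC
    have hpre : (fun ω => (X ω, V ω)) ⁻¹' (A ×ˢ C) = X ⁻¹' A ∩ V ⁻¹' C :=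
      Set.mk_preimage_prod _ _
    have hreal := rect_core P X U V hX hU hV hcondindep hA hB hC
    have hmeasκV : Measurable fun ω => κ (V ω) B := (Kernel.measurable_coe κ hB).comp hV
    have hfin : ∫⁻ ω in X ⁻¹' A ∩ V ⁻¹' C, κ (V ω) B ∂P ≠ ⊤ := by
      refine ne_of_lt (lt_of_le_of_lt (lintegral_mono fun ω => prob_le_one) ?_)
      rw [setLIntegral_one]
      exact measure_lt_top P _
    have h1 : ∫ ω in X ⁻¹' A ∩ V ⁻¹' C, (κ (V ω) B).toReal ∂P
        = (∫⁻ ω in X ⁻¹' A ∩ V ⁻¹' C, κ (V ω) B ∂P).toReal :=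
      integral_toReal hmeasκV.aemeasurable.restrict
        (ae_of_all _ fun ω => measure_lt_top _ _)
    have h2 : P (X ⁻¹' A ∩ V ⁻¹' C ∩ U ⁻¹' B)
        = ∫⁻ ω in X ⁻¹' A ∩ V ⁻¹' C, κ (V ω) B ∂P :=
      (ENNReal.toReal_eq_toReal_iff' (measure_ne_top P _) hfin).mp (hreal.trans h1)
    have hmap := setLIntegral_map (μ := P) (g := fun ω => (X ω, V ω))
      (f := fun p : β × ℝ => κ p.2 B) (hA.prod hC)
      ((Kernel.measurable_coe κ hB).comp measurable_snd) hXV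
    rw [hpre, h2, hμ_def, hmap, hpre]
  -- inner extension: value on all S for fixed B
  have inner : ∀ B : Set ℝ, MeasurableSet B → ∀ S : Set (β × ℝ), MeasurableSet S →
      P ((fun ω => (X ω, V ω)) ⁻¹' S ∩ U ⁻¹' B) = ∫⁻ p in S, κ p.2 B ∂μ := by
    intro B hB
    set μ₁ := Measure.map (fun ω => (X ω, V ω)) (P.restrict (U ⁻¹' B)) with hμ₁
    set μ₂ := μ.withDensity (fun p => κ p.2 B) with hμ₂
    have hμ₁app : ∀ S : Set (β × ℝ), MeasurableSet S →
        μ₁ S = P ((fun ω => (X ω, V ω)) ⁻¹' S ∩ U ⁻¹' B) := by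
      intro S hS
      rw [hμ₁, Measure.map_apply hXV hS, Measure.restrict_apply (hXV hS)]
    have hμ₂app : ∀ S : Set (β × ℝ), MeasurableSet S →
        μ₂ S = ∫⁻ p in S, κ p.2 B ∂μ := by
      intro S hS
      rw [hμ₂, withDensity_apply _ hS]
    haveI : IsFiniteMeasure μ₁ := by
      constructor
      rw [hμ₁app _ MeasurableSet.univ]
      exact measure_lt_top P _
    haveI : IsFiniteMeasure μ₂ := by
      refine isFiniteMeasure_withDensity (ne_of_lt (lt_of_le_of_lt
        (lintegral_mono fun p => prob_le_one) ?_))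
      rw [lintegral_one]
      exact measure_lt_top μ _
    have hext : μ₁ = μ₂ := by
      refine ext_of_generate_finite _ generateFrom_prod.symm isPiSystem_prod ?_ ?_
      · rintro _ ⟨A, hA, C, hC, rfl⟩
        rw [hμ₁app _ ((hA : MeasurableSet A).prod hC), hμ₂app _ (hA.prod hC)]
        exact key B hB A hA C hC
      · rw [hμ₁app _ MeasurableSet.univ, hμ₂app _ MeasurableSet.univ,
          ← Set.univ_prod_univ]
        exact key B hB _ MeasurableSet.univ _ MeasurableSet.univ
    intro S hS
    rw [← hμ₁app S hS, hext, hμ₂app S hS]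
  -- outer extension
  haveI : IsProbabilityMeasure (P.map fun ω => ((X ω, V ω), U ω)) :=
    Measure.isProbabilityMeasure_map (hXV.prodMk hU).aemeasurable
  refine ext_of_generate_finite _ generateFrom_prod.symm isPiSystem_prod ?_ ?_
  · rintro _ ⟨S, hS, B, hB, rfl⟩
    have hS' : MeasurableSet S := hS
    have hB' : MeasurableSet B := hB
    rw [Measure.map_apply (hXV.prodMk hU) (hS'.prod hB'),
      Measure.compProd_apply_prod hS' hB']
    have : (fun ω => ((X ω, V ω), U ω)) ⁻¹' (S ×ˢ B)
        = (fun ω => (X ω, V ω)) ⁻¹' S ∩ U ⁻¹' B := Set.mk_preimage_prod _ _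
    rw [this, inner B hB' S hS']
    refine setLIntegral_congr_fun hS' (fun p _ => ?_)
    rw [hη_def, Kernel.comap_apply]
  · rw [measure_univ, measure_univ]


end AuxCondDistribCDF

/-- **Conditional CDF representation (Proposition 1, CDF form).** In the model
`Y = ⟨X, β₀(U)⟩ + ε` with `ε ⟂ (X, V, U)` and `X ⟂ U | σ(V)`, for a.e. `(x, v)` under the
law of `(X, V)`, the regular conditional distribution of `Y` given `(X, V) = (x, v)`
satisfies `P(Y ≤ y | X = x, V = v) = ∫_{[0,1]} F_ε(y − ⟨x, β₀(u)⟩) dκ_v(u)`, where `κ` is a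
regular conditional distribution of `U` given `V` and `F_ε(t) = P(ε ≤ t)`. -/
theorem condDistrib_eq_integral_cdf
    {Ω : Type*} [MeasurableSpace Ω] [StandardBorelSpace Ω] [Nonempty Ω]
    (P : Measure Ω) [IsProbabilityMeasure P]
    {d : ℕ}
    (X : Ω → EuclideanSpace ℝ (Fin d)) (U V ε : Ω → ℝ)
    (β₀ : ℝ → EuclideanSpace ℝ (Fin d))
    (hX : Measurable X) (hU : Measurable U) (hV : Measurable V) (hε : Measurable ε)
    (hβ : Measurable β₀)
    (hUrange : ∀ ω, U ω ∈ Set.Icc (0:ℝ) 1)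
    (hVrange : ∀ ω, V ω ∈ Set.Icc (0:ℝ) 1)
    (Y : Ω → ℝ) (hY : Y = fun ω => ⟪X ω, β₀ (U ω)⟫ + ε ω)
    (hindep : IndepFun ε (fun ω => (X ω, V ω, U ω)) P)
    (hcondindep : CondIndepFun (MeasurableSpace.comap V inferInstance)
      (Measurable.comap_le hV) X U P) :
    ∀ᵐ p ∂(P.map (fun ω => (X ω, V ω))), ∀ y : ℝ,
      condDistrib Y (fun ω => (X ω, V ω)) P p (Set.Iic y)
        = ENNReal.ofReal (∫ u in Set.Icc (0:ℝ) 1,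
            (P {ω | ε ω ≤ y - ⟪p.1, β₀ u⟫}).toReal ∂(condDistrib U V P p.2)) := by
  have hXV : Measurable fun ω => (X ω, V ω) := hX.prodMk hV
  have hY' : Measurable Y := by
    rw [hY]; exact (hX.inner (hβ.comp hU)).add hε
  haveI : IsProbabilityMeasure (P.map fun ω => (X ω, V ω)) :=
    Measure.isProbabilityMeasure_map hXV.aemeasurable
  set μ := P.map (fun ω => (X ω, V ω)) with hμ_def
  set κ := condDistrib U V P with hκ_def
  set ν := P.map ε with hν_def
  haveI : IsProbabilityMeasure ν := Measure.isProbabilityMeasure_map hε.aemeasurable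
  set η := κ.comap (Prod.snd : EuclideanSpace ℝ (Fin d) × ℝ → ℝ) measurable_snd with hη_def
  haveI : IsMarkovKernel η := by rw [hη_def]; infer_instance
  have hstepA := stepA P X U V hX hU hV hcondindep
  -- the candidate kernel
  set gξ : (EuclideanSpace ℝ (Fin d) × ℝ) × ℝ × ℝ → ℝ := fun q => ⟪q.1.1, β₀ q.2.1⟫ + q.2.2 with hgξ_def
  have hgξ : Measurable gξ :=
    ((measurable_fst.comp measurable_fst).inner
      (hβ.comp (measurable_fst.comp measurable_snd))).add
      (measurable_snd.comp measurable_snd)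
  set ξ : Kernel (EuclideanSpace ℝ (Fin d) × ℝ) ℝ :=
    Kernel.map ((Kernel.deterministic (id : EuclideanSpace ℝ (Fin d) × ℝ → EuclideanSpace ℝ (Fin d) × ℝ) measurable_id) ×ₖ
      (η ×ₖ Kernel.const (EuclideanSpace ℝ (Fin d) × ℝ) ν)) gξ with hξ_def
  haveI : IsMarkovKernel ξ := by
    rw [hξ_def]
    exact Kernel.IsMarkovKernel.map _ hgξ
  have hξT : ∀ (p : EuclideanSpace ℝ (Fin d) × ℝ) (T : Set ℝ), MeasurableSet T →
      ξ p T = ∫⁻ u, ν {e | ⟪p.1, β₀ u⟫ + e ∈ T} ∂(κ p.2) := by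
    intro p T hT
    rw [hξ_def, Kernel.map_apply' _ hgξ _ hT, Kernel.prod_apply,
      Kernel.deterministic_apply, id_eq, Measure.dirac_prod,
      Measure.map_apply measurable_prodMk_left (hgξ hT)]
    have hset : Prod.mk p ⁻¹' (gξ ⁻¹' T) = {q : ℝ × ℝ | ⟪p.1, β₀ q.1⟫ + q.2 ∈ T} := rfl
    rw [hset, Kernel.prod_apply, Kernel.const_apply, hη_def, Kernel.comap_apply,
      Measure.prod_apply]
    · rfl
    · exact ((measurable_const.inner (hβ.comp measurable_fst)).add measurable_snd) hT
  -- independence: law of (((X,V),U), ε) is a product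
  have hW' : Measurable fun ω => ((X ω, V ω), U ω) := hXV.prodMk hU
  have hindep2 : IndepFun (fun ω => ((X ω, V ω), U ω)) ε P := by
    have hcomp : (fun ω => ((X ω, V ω), U ω))
        = (fun q : EuclideanSpace ℝ (Fin d) × ℝ × ℝ => ((q.1, q.2.1), q.2.2)) ∘ (fun ω => (X ω, V ω, U ω)) := rfl
    rw [hcomp]
    exact (hindep.comp measurable_id
      ((measurable_fst.prodMk (measurable_fst.comp measurable_snd)).prodMk
        (measurable_snd.comp measurable_snd))).symm
  have hlaw2 : P.map (fun ω => (((X ω, V ω), U ω), ε ω))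
      = (P.map (fun ω => ((X ω, V ω), U ω))).prod ν :=
    (indepFun_iff_map_prod_eq_prod_map_map hW'.aemeasurable hε.aemeasurable).mp hindep2
  -- the compProd identity
  have hstar : P.map (fun ω => ((X ω, V ω), Y ω)) = μ ⊗ₘ ξ := by
    refine ext_of_generate_finite _ generateFrom_prod.symm isPiSystem_prod ?_ ?_
    swap
    · haveI : IsProbabilityMeasure (P.map fun ω => ((X ω, V ω), Y ω)) :=
        Measure.isProbabilityMeasure_map (hXV.prodMk hY').aemeasurable
      rw [measure_univ, measure_univ]
    rintro _ ⟨S, hS, T, hT, rfl⟩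
    have hS' : MeasurableSet S := hS
    have hT' : MeasurableSet T := hT
    set G : ((EuclideanSpace ℝ (Fin d) × ℝ) × ℝ) × ℝ → Prop :=
      fun q => q.1.1 ∈ S ∧ ⟪q.1.1.1, β₀ q.1.2⟫ + q.2 ∈ T with hG_def
    have hGmeas : MeasurableSet {q | G q} := by
      refine MeasurableSet.inter ?_ ?_
      · exact (measurable_fst.comp measurable_fst) hS'
      · exact (((measurable_fst.comp (measurable_fst.comp measurable_fst)).inner
          (hβ.comp (measurable_snd.comp measurable_fst))).add measurable_snd) hT'
    have hev : (fun ω => ((X ω, V ω), Y ω)) ⁻¹' (S ×ˢ T)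
        = (fun ω => (((X ω, V ω), U ω), ε ω)) ⁻¹' {q | G q} := by
      ext ω
      simp only [Set.mem_preimage, Set.mem_prod, Set.mem_setOf_eq, hG_def, hY]
    -- slice function
    set f : (EuclideanSpace ℝ (Fin d) × ℝ) × ℝ → ℝ≥0∞ := fun q => ν {e | ⟪q.1.1, β₀ q.2⟫ + e ∈ T} with hf_def
    have hslice : Measurable fun z : ℝ => ν {e | z + e ∈ T} := by
      have : MeasurableSet {q : ℝ × ℝ | q.1 + q.2 ∈ T} :=
        (measurable_fst.add measurable_snd) hT'
      exact measurable_measure_prodMk_left this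
    have hfmeas : Measurable f :=
      hslice.comp ((measurable_fst.comp measurable_fst).inner (hβ.comp measurable_snd))
    have hpt : ∀ q : (EuclideanSpace ℝ (Fin d) × ℝ) × ℝ, ν {e | G (q, e)} = (Prod.fst ⁻¹' S).indicator f q := by
      intro q
      by_cases hq : q.1 ∈ S
      · rw [Set.indicator_of_mem (show q ∈ Prod.fst ⁻¹' S from hq) f]
        congr 1
        ext e
        simp [hG_def, hq]
      · rw [Set.indicator_of_notMem (show q ∉ Prod.fst ⁻¹' S from hq) f]
        have : {e | G (q, e)} = ∅ := by
          ext e; simp [hG_def, hq]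
        rw [this, measure_empty]
    calc (P.map fun ω => ((X ω, V ω), Y ω)) (S ×ˢ T)
        = P ((fun ω => (((X ω, V ω), U ω), ε ω)) ⁻¹' {q | G q}) := by
          rw [Measure.map_apply (hXV.prodMk hY') (hS'.prod hT'), hev]
      _ = ((P.map fun ω => ((X ω, V ω), U ω)).prod ν) {q | G q} := by
          rw [← hlaw2, Measure.map_apply ((hW').prodMk hε) hGmeas]
      _ = ∫⁻ q, ν {e | G (q, e)} ∂(P.map fun ω => ((X ω, V ω), U ω)) := by
          rw [Measure.prod_apply hGmeas]; rfl
      _ = ∫⁻ q in (Prod.fst ⁻¹' S), f q ∂(μ ⊗ₘ η) := by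
          rw [hstepA]
          simp_rw [hpt]
          rw [lintegral_indicator (measurable_fst hS')]
      _ = ∫⁻ p in S, ∫⁻ u, f (p, u) ∂(η p) ∂μ := by
          rw [← Set.prod_univ,
            Measure.setLIntegral_compProd hfmeas hS' MeasurableSet.univ]
          simp [Measure.restrict_univ]
      _ = ∫⁻ p in S, ξ p T ∂μ := by
          refine setLIntegral_congr_fun hS' (fun p _ => ?_)
          rw [hξT p T hT', hη_def, Kernel.comap_apply]
      _ = (μ ⊗ₘ ξ) (S ×ˢ T) := (Measure.compProd_apply_prod hS' hT').symm
  -- identify the conditional distribution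
  have hcd := condDistrib_ae_eq_of_measure_eq_compProd (fun ω => (X ω, V ω)) hY'.aemeasurable hstar
  -- support of κ p.2
  have hsupp : ∀ᵐ p ∂μ, κ p.2 (Set.Icc (0:ℝ) 1)ᶜ = 0 := by
    have h0 : (P.map fun ω => ((X ω, V ω), U ω))
        (Set.univ ×ˢ (Set.Icc (0:ℝ) 1)ᶜ) = 0 := by
      rw [Measure.map_apply hW' (MeasurableSet.univ.prod measurableSet_Icc.compl)]
      convert measure_empty (μ := P)
      ext ω
      simp [hUrange ω]
    rw [hstepA, Measure.compProd_apply_prod MeasurableSet.univ measurableSet_Icc.compl,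
      Measure.restrict_univ] at h0
    have hmeas : Measurable fun p : EuclideanSpace ℝ (Fin d) × ℝ => η p (Set.Icc (0:ℝ) 1)ᶜ :=
      Kernel.measurable_coe η measurableSet_Icc.compl
    have := (lintegral_eq_zero_iff hmeas).mp h0
    filter_upwards [this] with p hp
    rw [hη_def, Kernel.comap_apply] at hp
    exact hp
  filter_upwards [hcd, hsupp] with p hp hpsupp
  intro y
  rw [hp, hξT p _ measurableSet_Iic]
  have hset : ∀ u : ℝ, {e : ℝ | ⟪p.1, β₀ u⟫ + e ∈ Set.Iic y}
      = Set.Iic (y - ⟪p.1, β₀ u⟫) := by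
    intro u; ext e
    simp only [Set.mem_setOf_eq, Set.mem_Iic]
    constructor <;> intro h <;> linarith
  have hνP : ∀ u : ℝ, ν (Set.Iic (y - ⟪p.1, β₀ u⟫))
      = P {ω | ε ω ≤ y - ⟪p.1, β₀ u⟫} := by
    intro u
    rw [hν_def, Measure.map_apply hε measurableSet_Iic]
    rfl
  have hrestrict : (κ p.2).restrict (Set.Icc (0:ℝ) 1) = κ p.2 :=
    Measure.restrict_eq_self_of_ae_mem (ae_iff.mpr hpsupp)
  have hmeasf : Measurable fun u : ℝ => ν (Set.Iic (y - ⟪p.1, β₀ u⟫)) := by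
    have h1 : Measurable fun z : ℝ => ν (Set.Iic z) := by
      have : MeasurableSet {q : ℝ × ℝ | q.2 ≤ q.1} :=
        measurableSet_le measurable_snd measurable_fst
      exact measurable_measure_prodMk_left this
    exact h1.comp (measurable_const.sub (measurable_const.inner hβ))
  have hfin : ∫⁻ u, ν (Set.Iic (y - ⟪p.1, β₀ u⟫)) ∂(κ p.2) ≠ ⊤ := by
    refine ne_of_lt (lt_of_le_of_lt (lintegral_mono fun u => prob_le_one) ?_)
    rw [lintegral_one, measure_univ]
    exact ENNReal.one_lt_top
  calc ∫⁻ u, ν {e | ⟪p.1, β₀ u⟫ + e ∈ Set.Iic y} ∂(κ p.2)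
      = ∫⁻ u, ν (Set.Iic (y - ⟪p.1, β₀ u⟫)) ∂(κ p.2) := by simp_rw [hset]
    _ = ENNReal.ofReal (∫ u, (ν (Set.Iic (y - ⟪p.1, β₀ u⟫))).toReal ∂(κ p.2)) := by
        rw [integral_toReal hmeasf.aemeasurable (ae_of_all _ fun u => measure_lt_top _ _),
          ENNReal.ofReal_toReal hfin]
    _ = ENNReal.ofReal (∫ u in Set.Icc (0:ℝ) 1,
          (P {ω | ε ω ≤ y - ⟪p.1, β₀ u⟫}).toReal ∂(κ p.2)) := by
        rw [hrestrict]
        simp_rw [hνP]
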